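/- Let p be an odd prime and write p - 1 = 2^n · z with z odd. Let g ∈ (ZMod p)ˣ have multiplicative order (p-1)/2 and m' ∈ (ZMod p)ˣ have multiplicative order 2^n, with g^z · m'^(2z) = 1. Define the sequence U by U₀ = g and U_{x+1} = (m'·U_x)². Let k be the least positive integer such that z divides 2^k - 1. Then for all x, U_x has multiplicative order (p-1)/2 and m'·U_x has multiplicative order p - 1; moreover the values U₀, U₁, …, U_{k-1} are pairwise distinct and U_k = U₀ (so U is periodic of period k). -/

import Mathlib

theorem sequence_of_semi_primitive_roots (p : ℕ) (hp : p.Prime) (hp2 : p ≠ 2)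
    (n z : ℕ) (hz : Odd z) (hnz : p - 1 = 2 ^ n * z)
    (g m' : (ZMod p)ˣ) (hg : orderOf g = (p - 1) / 2) (hm' : orderOf m' = 2 ^ n)
    (hgm : g ^ z * m' ^ (2 * z) = 1)
    (U : ℕ → (ZMod p)ˣ) (hU0 : U 0 = g) (hU : ∀ x, U (x + 1) = (m' * U x) ^ 2)
    (k : ℕ) (hk : 0 < k ∧ z ∣ 2 ^ k - 1 ∧ ∀ j, 0 < j → z ∣ 2 ^ j - 1 → k ≤ j) :
    (∀ x, orderOf (U x) = (p - 1) / 2 ∧ orderOf (m' * U x) = p - 1) ∧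
    (∀ x y, x < y → y < k → U x ≠ U y) ∧
    U k = U 0 ∧ (∀ x, U (x + k) = U x) := by
  haveI := Fact.mk hp
  obtain ⟨hk0, hkd, hkmin⟩ := hk
  have hzpos : 0 < z := hz.pos
  have hp2le : 2 ≤ p := hp.two_le
  have hpodd : Odd p := hp.odd_of_ne_two hp2
  have heven : 2 ∣ p - 1 := by obtain ⟨t, ht⟩ := hpodd; omega
  have hn1 : 1 ≤ n := by
    rcases Nat.eq_zero_or_pos n with h | h
    · subst h
      simp only [pow_zero, one_mul] at hnz
      obtain ⟨t, ht⟩ := hz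
      omega
    · omega
  -- key arithmetic
  have hhalf : (p - 1) / 2 = 2 ^ (n - 1) * z := by
    have : 2 ^ n = 2 * 2 ^ (n - 1) := by
      rw [← pow_succ']
      congr 1
      omega
    rw [this, mul_assoc] at hnz
    omega
  -- the odd component
  set c : (ZMod p)ˣ := g * m' ^ 2 with hc
  have hcz : c ^ z = 1 := by
    rw [hc, mul_pow, ← pow_mul]
    exact hgm
  have hcdvd : orderOf c ∣ z := orderOf_dvd_of_pow_eq_one hcz
  have hcodd : Odd (orderOf c) := hz.of_dvd_nat hcdvd
  set a : (ZMod p)ˣ := m'⁻¹ with ha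
  have haord : orderOf a = 2 ^ n := by rw [ha, orderOf_inv, hm']
  have ha2 : orderOf (a ^ 2) = 2 ^ (n - 1) := by
    rw [orderOf_pow, haord]
    have : Nat.gcd (2 ^ n) 2 = 2 := by
      rw [Nat.gcd_comm]
      exact Nat.gcd_eq_left (dvd_pow_self 2 (by omega))
    rw [this]
    rw [Nat.pow_div hn1 (by norm_num)]
  have hga : g = a ^ 2 * c := by
    rw [ha, hc, mul_comm g (m' ^ 2), inv_pow, inv_mul_cancel_left]
  have hcop : ∀ d, d ∣ z → Nat.Coprime (2 ^ (n - 1)) d := fun d hd =>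
    Nat.Coprime.pow_left _ ((hz.of_dvd_nat hd).coprime_two_right.symm)
  have hcord : orderOf c = z := by
    have h1 : orderOf g = orderOf (a ^ 2) * orderOf c := by
      rw [hga]
      exact (Commute.all _ _).orderOf_mul_eq_mul_orderOf_of_coprime
        (by rw [ha2]; exact hcop _ hcdvd)
    rw [hg, hhalf, ha2] at h1
    have : 0 < 2 ^ (n - 1) := Nat.pow_pos (by norm_num)
    exact (Nat.eq_of_mul_eq_mul_left this h1.symm)
  -- explicit formula
  have hform : ∀ x, U x = a ^ 2 * c ^ (2 ^ x) := by
    intro x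
    induction x with
    | zero => rw [hU0, hga, pow_zero, pow_one]
    | succ x ih =>
        rw [hU x, ih]
        have hma : m' * a = 1 := by rw [ha, mul_inv_cancel]
        have hbase : m' * (a ^ 2 * c ^ 2 ^ x) = a * c ^ 2 ^ x := by
          rw [sq, mul_assoc a a, ← mul_assoc m' a, hma, one_mul]
        rw [hbase, mul_pow, ← pow_mul, ← pow_succ]
  have hcpow : ∀ x : ℕ, orderOf (c ^ (2 ^ x)) = z := by
    intro x
    rw [orderOf_pow, hcord]
    have : Nat.gcd z (2 ^ x) = 1 :=
      (Nat.Coprime.pow_right _ hz.coprime_two_right)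
    rw [this, Nat.div_one]
  refine ⟨?_, ?_, ?_, ?_⟩
  · intro x
    constructor
    · rw [hform x]
      rw [(Commute.all _ _).orderOf_mul_eq_mul_orderOf_of_coprime
        (by rw [ha2, hcpow]; exact hcop z dvd_rfl), ha2, hcpow, hhalf]
    · have : m' * U x = a * c ^ (2 ^ x) := by
        rw [hform x, ha]
        group
      rw [this, (Commute.all _ _).orderOf_mul_eq_mul_orderOf_of_coprime
        (by rw [haord, hcpow]; exact Nat.Coprime.pow_left _ hz.coprime_two_right.symm),
        haord, hcpow, hnz]
  · intro x y hxy hyk hUxy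
    rw [hform x, hform y] at hUxy
    have hcc : c ^ (2 ^ x) = c ^ (2 ^ y) := mul_left_cancel hUxy
    rw [pow_eq_pow_iff_modEq, hcord] at hcc
    have hdvd : z ∣ 2 ^ y - 2 ^ x := (Nat.modEq_iff_dvd' (Nat.pow_le_pow_right (by norm_num) hxy.le)).mp hcc
    have hfac : 2 ^ y - 2 ^ x = 2 ^ x * (2 ^ (y - x) - 1) := by
      rw [Nat.mul_sub_one]
      rw [← pow_add]
      congr 2
      omega
    rw [hfac] at hdvd
    have : z ∣ 2 ^ (y - x) - 1 :=
      (Nat.Coprime.dvd_of_dvd_mul_left (Nat.Coprime.pow_right _ hz.coprime_two_right) hdvd)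
    have := hkmin (y - x) (by omega) this
    omega
  · rw [hform k, hform 0]
    congr 1
    rw [pow_eq_pow_iff_modEq, hcord, pow_zero]
    exact ((Nat.modEq_iff_dvd' (Nat.one_le_two_pow)).mpr hkd).symm
  · intro x
    rw [hform (x + k), hform x]
    congr 1
    rw [pow_eq_pow_iff_modEq, hcord, pow_add]
    have h1 : (2:ℕ) ^ k ≡ 1 [MOD z] := ((Nat.modEq_iff_dvd' (Nat.one_le_two_pow)).mpr hkd).symm
    calc (2:ℕ) ^ x * 2 ^ k ≡ 2 ^ x * 1 [MOD z] := h1.mul_left _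
      _ = 2 ^ x := mul_one _
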